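/- Let (κ₁, κ₂) ∈ ℂ² satisfy κ₁² = κ₂², κ₁κ₂ ≠ 0 and the moduli conditions. Then the six triple points of the arrangement M^{κ₁,κ₂}_γ given in homogeneous coordinates by (1:0:−κ₁⁻¹) = L₁∩L₈∩L₁₀, (1:0:−κ₂) = L₁∩L₁₁∩L₁₂, (0:1:−κ₁) = L₂∩L₈∩L₉, (0:1:−κ₂⁻¹) = L₂∩L₁₁∩L₁₃, (κ₁:−1:0) = L₃∩L₉∩L₁₀ and (1:−κ₂:0) = L₃∩L₁₂∩L₁₃ lie on a common smooth conic (i.e. there is a quadratic form on ℂ³ with nondegenerate associated symmetric bilinear form vanishing at representatives of all six points) if and only if κ₁ = κ₂. -/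

import Mathlib

noncomputable section

/-- The moduli conditions on the parameters `κ₁, κ₂`. -/
def ModuliCond (κ₁ κ₂ : ℂ) : Prop :=
  κ₁ ^ 3 ≠ 1 ∧ κ₂ ^ 3 ≠ 1 ∧ κ₁ * κ₂ ≠ 1 ∧
  (κ₁ = κ₂ →
    (2 * κ₁ ^ 2 + κ₁ + 1 ≠ 0 ∧ 2 * κ₁ ^ 2 + 2 * κ₁ + 1 ≠ 0 ∧ κ₁ ≠ -1/2 ∧
     κ₁ ^ 3 + 3 * κ₁ ^ 2 + 2 * κ₁ + 1 ≠ 0 ∧ κ₁ ^ 3 + 2 * κ₁ ^ 2 + κ₁ + 1 ≠ 0)) ∧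
  (κ₁ = -κ₂ →
    (κ₁ ^ 3 + κ₁ ^ 2 + 1 ≠ 0 ∧ κ₁ ^ 3 - κ₁ ^ 2 - 1 ≠ 0 ∧ 2 * κ₁ ^ 2 + 1 ≠ 0 ∧
     κ₁ ^ 3 + κ₁ - 1 ≠ 0 ∧ κ₁ ^ 3 + κ₁ + 1 ≠ 0))

private lemma bilin_apply (t : ℂ) (x y : Fin 3 → ℂ) :
    Matrix.toBilin' !![1, t, t; t, 1, t; t, t, 1] x y
    = x 0 * y 0 + x 1 * y 1 + x 2 * y 2
      + t * (x 0 * y 1 + x 1 * y 0 + x 0 * y 2 + x 2 * y 0 + x 1 * y 2 + x 2 * y 1) := by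
  simp [Matrix.toBilin'_apply, Fin.sum_univ_three, Matrix.vecHead, Matrix.vecTail]
  ring

private lemma det_eq (t : ℂ) :
    (!![1, t, t; t, 1, t; t, t, 1]).det = (1 - t)^2 * (1 + 2*t) := by
  simp [Matrix.det_fin_three, Matrix.vecHead, Matrix.vecTail]
  ring

private lemma vec_expand (x y z : ℂ) :
    (![x, y, z] : Fin 3 → ℂ)
      = x • ![1, 0, 0] + y • ![0, 1, 0] + z • ![0, 0, 1] := by
  funext i; fin_cases i <;> simp

private lemma forward_aux (κ₁ κ₂ : ℂ) (hsq : κ₁ ^ 2 = κ₂ ^ 2) (h0 : κ₁ * κ₂ ≠ 0)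
    (hm : ModuliCond κ₁ κ₂) (hκ₁ : κ₁ ≠ 0) (hκ₂ : κ₂ ≠ 0)
    (Q : QuadraticForm ℂ (Fin 3 → ℂ))
    (hnd : (QuadraticMap.associated (R := ℂ) Q).Nondegenerate)
    (h1 : Q ![1, 0, -κ₁⁻¹] = 0) (h2 : Q ![1, 0, -κ₂] = 0)
    (h3 : Q ![0, 1, -κ₁] = 0) (h4 : Q ![0, 1, -κ₂⁻¹] = 0)
    (h5 : Q ![κ₁, -1, 0] = 0) (h6 : Q ![1, -κ₂, 0] = 0)
    (hne : ¬κ₁ = κ₂) (hm2 : κ₁ = -κ₂) : False := by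
  subst hm2
  set κ := κ₂ with hκdef
  have hP : κ^2 + 1 ≠ 0 := fun h => hm.2.2.1 (by linear_combination -h)
  set B := QuadraticMap.associated (R := ℂ) Q with hB
  have hs := QuadraticMap.associated_isSymm ℂ Q
  set a := B ![1,0,0] ![1,0,0] with ha
  set b := B ![0,1,0] ![0,1,0] with hb
  set c := B ![0,0,1] ![0,0,1] with hc
  set d := B ![1,0,0] ![0,1,0] with hd
  set e := B ![1,0,0] ![0,0,1] with he
  set f := B ![0,1,0] ![0,0,1] with hf
  have hQv : ∀ x y z : ℂ, Q ![x, y, z]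
      = x^2*a + y^2*b + z^2*c + 2*x*y*d + 2*x*z*e + 2*y*z*f := by
    intro x y z
    rw [← QuadraticMap.associated_eq_self_apply ℂ Q, ← hB, vec_expand x y z]
    simp only [map_add, map_smul, LinearMap.add_apply, LinearMap.smul_apply, smul_eq_mul]
    have s1 := hs ![1,0,0] ![0,1,0]
    have s2 := hs ![1,0,0] ![0,0,1]
    have s3 := hs ![0,1,0] ![0,0,1]
    simp only [RingHom.id_apply, ← hB] at s1 s2 s3
    rw [← s1, ← s2, ← s3, ← ha, ← hb, ← hc, ← hd, ← he, ← hf]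
    ring
  rw [hQv] at h1 h2 h3 h4 h5 h6
  field_simp at h1 h4
  have h2κ : (2:ℂ)*κ ≠ 0 := by simpa using hκ₂
  have e1 : a*κ^2 + c + 2*e*κ = 0 := by
    have h1' : κ * (a*κ^2 + c + 2*e*κ) = κ * 0 := by linear_combination κ * h1
    exact mul_left_cancel₀ hκ₂ h1'
  have e4 : b*κ^2 + c - 2*f*κ = 0 := by
    have h4' : κ * (b*κ^2 + c - 2*f*κ) = κ * 0 := by linear_combination κ * h4
    exact mul_left_cancel₀ hκ₂ h4'
  have hac : a + c = 0 := by
    have hh : (κ^2+1)*(a+c) = 0 := by linear_combination e1 + h2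
    exact (mul_eq_zero.mp hh).resolve_left hP
  have hbc : b + c = 0 := by
    have hh : (κ^2+1)*(b+c) = 0 := by linear_combination e4 + h3
    exact (mul_eq_zero.mp hh).resolve_left hP
  have hab : a + b = 0 := by
    have hh : (κ^2+1)*(a+b) = 0 := by linear_combination h5 + h6
    exact (mul_eq_zero.mp hh).resolve_left hP
  have ha0 : a = 0 := by linear_combination (hac + hab - hbc)/2
  have hb0 : b = 0 := by linear_combination (hbc + hab - hac)/2
  have hc0 : c = 0 := by linear_combination (hac + hbc - hab)/2
  have he0 : e = 0 := by
    have hh : e * (2*κ) = 0 := by linear_combination e1 - κ^2*ha0 - hc0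
    exact (mul_eq_zero.mp hh).resolve_right h2κ
  have hf0 : f = 0 := by
    have hh : f * (2*κ) = 0 := by linear_combination h3 - hb0 - κ^2*hc0
    exact (mul_eq_zero.mp hh).resolve_right h2κ
  have hd0 : d = 0 := by
    have hh : d * (2*κ) = 0 := by linear_combination h5 - κ^2*ha0 - hb0
    exact (mul_eq_zero.mp hh).resolve_right h2κ
  have hy : ∀ y : Fin 3 → ℂ, B ![1,0,0] y = 0 := by
    intro y
    have hyv : y = ![y 0, y 1, y 2] := by funext i; fin_cases i <;> rfl
    rw [hyv, vec_expand (y 0) (y 1) (y 2)]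
    simp only [map_add, map_smul, smul_eq_mul]
    rw [← ha, ← hd, ← he, ha0, hd0, he0]
    ring
  have h10 := hnd.1 ![1,0,0] hy
  have : (1:ℂ) = 0 := by
    have := congrFun h10 0
    simpa using this
  exact one_ne_zero this

/--
For `(κ₁, κ₂)` with `κ₁² = κ₂²`, `κ₁κ₂ ≠ 0` and the moduli conditions,
the six triple points `(1:0:−κ₁⁻¹), (1:0:−κ₂), (0:1:−κ₁), (0:1:−κ₂⁻¹), (κ₁:−1:0),
(1:−κ₂:0)` of `M^{κ₁,κ₂}_γ` lie on a common smooth conic — i.e. some quadratic form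
on `ℂ³` with nondegenerate associated symmetric bilinear form vanishes at
representatives of all six points — if and only if `κ₁ = κ₂`.
-/
theorem stmt_13 (κ₁ κ₂ : ℂ) (hsq : κ₁ ^ 2 = κ₂ ^ 2) (h0 : κ₁ * κ₂ ≠ 0)
    (hm : ModuliCond κ₁ κ₂) :
    (∃ Q : QuadraticForm ℂ (Fin 3 → ℂ),
      (QuadraticMap.associated (R := ℂ) Q).Nondegenerate ∧
      Q ![1, 0, -κ₁⁻¹] = 0 ∧ Q ![1, 0, -κ₂] = 0 ∧
      Q ![0, 1, -κ₁] = 0 ∧ Q ![0, 1, -κ₂⁻¹] = 0 ∧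
      Q ![κ₁, -1, 0] = 0 ∧ Q ![1, -κ₂, 0] = 0) ↔ κ₁ = κ₂ := by
  have hκ₁ : κ₁ ≠ 0 := left_ne_zero_of_mul h0
  have hκ₂ : κ₂ ≠ 0 := right_ne_zero_of_mul h0
  constructor
  · rintro ⟨Q, hnd, h1, h2, h3, h4, h5, h6⟩
    by_contra hne
    have hm2 : κ₁ = -κ₂ := by
      have h : (κ₁ - κ₂) * (κ₁ + κ₂) = 0 := by linear_combination hsq
      rcases mul_eq_zero.mp h with h | h
      · exact absurd (sub_eq_zero.mp h) hne
      · linear_combination h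
    exact forward_aux κ₁ κ₂ hsq h0 hm hκ₁ hκ₂ Q hnd h1 h2 h3 h4 h5 h6 hne hm2
  · intro heq
    subst heq
    have hκ := hκ₁
    have h1 : κ₁ ≠ 1 := by
      intro h; exact hm.1 (by rw [h]; norm_num)
    have h2 : κ₁^2 + κ₁ + 1 ≠ 0 := by
      intro h; exact hm.1 (by linear_combination (κ₁ - 1) * h)
    set t : ℂ := (κ₁^2 + 1)/(2*κ₁) with ht
    refine ⟨(Matrix.toBilin' !![1, t, t; t, 1, t; t, t, 1]).toQuadraticMap, ?_, ?_, ?_, ?_, ?_, ?_, ?_⟩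
    · have hsymm : (Matrix.toBilin' !![1, t, t; t, 1, t; t, t, 1]).IsSymm := by
        refine ⟨fun x y => ?_⟩
        simp only [RingHom.id_apply, bilin_apply]
        ring
      rw [QuadraticMap.associated_left_inverse ℂ hsymm.eq]
      have hdet : (!![1, t, t; t, 1, t; t, t, 1]).det ≠ 0 := by
        rw [det_eq]
        apply mul_ne_zero
        · apply pow_ne_zero
          rw [ht]
          rw [sub_ne_zero]
          intro h
          apply h1
          have h2κ : (2:ℂ)*κ₁ ≠ 0 := by simpa using hκ
          have := (div_eq_one_iff_eq h2κ).mp h.symm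
          have hfac : (κ₁ - 1)^2 = 0 := by linear_combination this
          have := pow_eq_zero_iff (n := 2) (by norm_num) |>.mp hfac
          linear_combination this
        · rw [ht]
          intro h
          apply h2
          have h2κ : (2:ℂ)*κ₁ ≠ 0 := by simpa using hκ
          field_simp at h
          linear_combination h
      have hM : (!![1, t, t; t, 1, t; t, t, 1]).Nondegenerate :=
        Matrix.nondegenerate_of_det_ne_zero hdet
      exact hM.toLinearMap₂'
    all_goals
      simp only [LinearMap.BilinMap.toQuadraticMap_apply, bilin_apply, ht,
        Matrix.cons_val_zero, Matrix.cons_val_one, Matrix.head_cons,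
        Matrix.cons_val_two, Matrix.tail_cons]
    all_goals field_simp; ring
end
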